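/- Let {G_α} be a family of profinite groups with pairwise disjoint sets Quo(G_α) of finite nonabelian simple quotients, and let G = ∏ G_α. If H is a maximal closed subgroup of G, then either (i) π_α(H) is a maximal closed subgroup of G_α for some α, in which case H = π_α⁻¹(π_α(H)), or (ii) π_α(H) = G_α for all α, in which case H contains the closed commutator subgroup G' and the image of H in G^ab is a maximal closed subgroup. -/

import Mathlib

/-- A maximal closed subgroup: a proper closed subgroup not properly contained in
any other proper closed subgroup. -/
def IsMaximalClosedSubgroup {G : Type*} [Group G] [TopologicalSpace G]
    (M : Subgroup G) : Prop :=
  IsClosed (M : Set G) ∧ M ≠ ⊤ ∧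
    ∀ K : Subgroup G, IsClosed (K : Set G) → K ≠ ⊤ → M ≤ K → K = M

open Subgroup
open scoped commutatorElement

section Helpers

variable {G : Type*} [Group G] [TopologicalSpace G] [IsTopologicalGroup G]

theorem continuous_of_isOpen_ker {S : Type*} [Group S] [TopologicalSpace S]
    [DiscreteTopology S] (f : G →* S) (h : IsOpen (f.ker : Set G)) : Continuous f := by
  rw [continuous_discrete_rng]
  intro s
  by_cases hs : ∃ x, f x = s
  · obtain ⟨x, rfl⟩ := hs
    have heq : f ⁻¹' {f x} = (fun y => x⁻¹ * y) ⁻¹' (f.ker : Set G) := by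
      ext y
      simp only [Set.mem_preimage, Set.mem_singleton_iff, SetLike.mem_coe,
        MonoidHom.mem_ker, map_mul, map_inv]
      rw [inv_mul_eq_one, eq_comm]
    rw [heq]
    exact h.preimage (continuous_const.mul continuous_id)
  · have : f ⁻¹' {s} = ∅ := by
      ext y; simp only [Set.mem_preimage, Set.mem_singleton_iff, Set.mem_empty_iff_false,
        iff_false]
      exact fun hy => hs ⟨y, hy⟩
    rw [this]; exact isOpen_empty

theorem isOpen_of_isMaximalClosed [CompactSpace G] [T2Space G] [TotallyDisconnectedSpace G]
    {H : Subgroup G} (h : IsMaximalClosedSubgroup H) : IsOpen (H : Set G) := by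
  obtain ⟨hcl, hne, hmax⟩ := h
  obtain ⟨g, hg⟩ : ∃ g, g ∉ H := by
    by_contra h'
    push_neg at h'
    exact hne ((Subgroup.eq_top_iff' H).mpr h')
  have hex : ∃ N : OpenNormalSubgroup G, g ∉ H ⊔ N.toSubgroup := by
    by_contra h'
    push_neg at h'
    have hgcl : g ∈ _root_.closure (H : Set G) := by
      rw [mem_closure_iff_nhds]
      intro t ht
      have hU : (fun x => g * x) ⁻¹' t ∈ nhds (1 : G) := by
        have : Continuous fun x : G => g * x := continuous_const.mul continuous_id
        exact this.continuousAt (x := 1) (by rwa [mul_one])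
      obtain ⟨V, hVsub, hVopen, hV1⟩ := mem_nhds_iff.mp hU
      obtain ⟨W, hWclopen, hW1, hWsub⟩ := compact_exists_isClopen_in_isOpen hVopen hV1
      obtain ⟨N, hN⟩ := IsTopologicalGroup.exist_openNormalSubgroup_sub_clopen_nhds_of_one
        hWclopen hW1
      have hgN := h' N
      rw [← SetLike.mem_coe, Subgroup.mul_normal] at hgN
      obtain ⟨x, hx, n, hn, hxn⟩ := hgN
      refine ⟨x, ?_, hx⟩
      have : x = g * n⁻¹ := by rw [← hxn]; group
      rw [this]
      exact hVsub (hWsub (hN (inv_mem hn)))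
    exact hg (by rwa [hcl.closure_eq] at hgcl)
  obtain ⟨N, hN⟩ := hex
  have hopen : IsOpen ((H ⊔ N.toSubgroup : Subgroup G) : Set G) :=
    Subgroup.isOpen_mono (le_sup_right : N.toSubgroup ≤ H ⊔ N.toSubgroup) N.isOpen
  have heq := hmax _ ((H ⊔ N.toSubgroup).isClosed_of_isOpen hopen)
    (fun ht => hN (ht.symm ▸ Subgroup.mem_top g)) le_sup_left
  rw [← heq]
  exact hopen

theorem pullback_isMaximalClosed {G₂ : Type*} [Group G₂] [TopologicalSpace G₂]
    (f : G →* G₂) (hf : Continuous f) (hfs : Function.Surjective f)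
    {H : Subgroup G} (hmax : IsMaximalClosedSubgroup H)
    (hcl : IsClosed ((H.map f : Subgroup G₂) : Set G₂))
    (hne : H.map f ≠ ⊤) :
    IsMaximalClosedSubgroup (H.map f) ∧ H = comap f (map f H) := by
  have key : ∀ K : Subgroup G₂, IsClosed (K : Set G₂) → K ≠ ⊤ → H.map f ≤ K →
      comap f K = H := by
    intro K hKcl hKne hKle
    refine hmax.2.2 _ (hKcl.preimage hf) ?_ (le_trans (le_comap_map f H) (comap_mono hKle))
    intro htop
    exact hKne (by rw [← map_comap_eq_self_of_surjective hfs K, htop,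
      Subgroup.map_top_of_surjective f hfs])
  have hH : H = comap f (map f H) := (key _ hcl hne le_rfl).symm
  refine ⟨⟨hcl, hne, ?_⟩, hH⟩
  intro K hKcl hKne hKle
  rw [← map_comap_eq_self_of_surjective hfs K, key K hKcl hKne hKle,
    ← map_comap_eq_self_of_surjective hfs (H.map f), key _ hcl hne le_rfl]

theorem isClosed_sup_of_normal [CompactSpace G] [T2Space G] {A B : Subgroup G}
    (hA : IsClosed (A : Set G)) (hB : IsClosed (B : Set G)) [B.Normal] :
    IsClosed ((A ⊔ B : Subgroup G) : Set G) := by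
  rw [Subgroup.mul_normal]
  exact (hA.isCompact.mul hB.isCompact).isClosed

end Helpers

section PiFactor

variable {ι : Type*} {G : ι → Type*} [∀ i, Group (G i)]

/-- The copy of a subgroup of one factor inside a product group. -/
def piFactor (i : ι) (N : Subgroup (G i)) : Subgroup (∀ i, G i) where
  carrier := {x | x i ∈ N ∧ ∀ j, j ≠ i → x j = 1}
  one_mem' := ⟨one_mem N, fun _ _ => rfl⟩
  mul_mem' := fun ha hb => ⟨mul_mem ha.1 hb.1,
    fun j hj => by simp [Pi.mul_apply, ha.2 j hj, hb.2 j hj]⟩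
  inv_mem' := fun ha => ⟨inv_mem ha.1, fun j hj => by simp [Pi.inv_apply, ha.2 j hj]⟩

theorem mem_piFactor {i : ι} {N : Subgroup (G i)} {x : ∀ i, G i} :
    x ∈ piFactor i N ↔ x i ∈ N ∧ ∀ j, j ≠ i → x j = 1 := Iff.rfl

theorem piFactor_normal {i : ι} {N : Subgroup (G i)} (hN : N.Normal) :
    (piFactor i N).Normal := by
  constructor
  intro n hn g
  refine ⟨?_, fun j hj => ?_⟩
  · simpa using hN.conj_mem _ hn.1 (g i)
  · simp [Pi.mul_apply, Pi.inv_apply, hn.2 j hj]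

theorem mulSingle_mem_piFactor [DecidableEq ι] {i : ι} {N : Subgroup (G i)} {a : G i} :
    Pi.mulSingle i a ∈ piFactor i N ↔ a ∈ N := by
  constructor
  · intro h
    simpa using h.1
  · intro h
    exact ⟨by simpa using h, fun j hj => Pi.mulSingle_eq_of_ne hj a⟩

theorem eq_mulSingle_of_mem_piFactor [DecidableEq ι] {i : ι} {N : Subgroup (G i)}
    {x : ∀ i, G i} (h : x ∈ piFactor i N) : x = Pi.mulSingle i (x i) := by
  funext j
  by_cases hj : j = i
  · subst hj; simp
  · simp [Pi.mulSingle_eq_of_ne hj, h.2 j hj]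

theorem piFactor_isClosed [∀ i, TopologicalSpace (G i)] [∀ i, T2Space (G i)]
    {i : ι} {N : Subgroup (G i)} (hN : IsClosed (N : Set (G i))) :
    IsClosed ((piFactor i N : Subgroup (∀ i, G i)) : Set (∀ i, G i)) := by
  have heq : ((piFactor i N : Subgroup (∀ i, G i)) : Set (∀ i, G i)) =
      ((fun x : ∀ i, G i => x i) ⁻¹' (N : Set (G i))) ∩
        ⋂ (j) (_ : j ≠ i), (fun x : ∀ i, G i => x j) ⁻¹' {1} := by
    ext x
    simp only [Set.mem_inter_iff, Set.mem_preimage, Set.mem_iInter, Set.mem_singleton_iff,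
      SetLike.mem_coe]
    exact Iff.rfl
  rw [heq]
  exact (hN.preimage (continuous_apply i)).inter
    (isClosed_iInter fun j => isClosed_iInter fun hj =>
      isClosed_singleton.preimage (continuous_apply j))

theorem conj_mulSingle [DecidableEq ι] (g : ∀ i, G i) (i : ι) (a : G i) :
    g * Pi.mulSingle i a * g⁻¹ = Pi.mulSingle i (g i * a * (g i)⁻¹) := by
  funext j
  by_cases hj : j = i
  · subst hj; simp
  · simp [Pi.mul_apply, Pi.inv_apply, Pi.mulSingle_eq_of_ne hj]

theorem singleProd_comm [DecidableEq ι] (s : Finset ι) (f : ∀ j, G j) :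
    (s : Set ι).Pairwise (Function.onFun Commute fun j => Pi.mulSingle j (f j)) :=
  fun a _ b _ _ => Pi.mulSingle_apply_commute f a b

/-- The canonical product of single-factor elements over a finset. -/
def singleProd [DecidableEq ι] (s : Finset ι) (f : ∀ j, G j) : ∀ j, G j :=
  s.noncommProd (fun j => Pi.mulSingle j (f j))
    (singleProd_comm s f)

theorem singleProd_apply [DecidableEq ι] (s : Finset ι) (f : ∀ j, G j) (k : ι) :
    singleProd s f k = if k ∈ s then f k else 1 := by
  unfold singleProd
  rw [show (s.noncommProd (fun j => Pi.mulSingle j (f j))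
      (singleProd_comm s f)) k =
      Pi.evalMonoidHom G k (s.noncommProd (fun j => Pi.mulSingle j (f j))
      (singleProd_comm s f)) from rfl,
    Finset.map_noncommProd]
  by_cases hk : k ∈ s
  · erw [if_pos hk, ← Finset.insert_erase hk,
      Finset.noncommProd_insert_of_notMem _ _ _ _ (Finset.notMem_erase _ _)]
    have h1 : (Pi.evalMonoidHom G k) (Pi.mulSingle k (f k)) = f k := Pi.mulSingle_eq_same k (f k)
    rw [h1, Finset.noncommProd_eq_pow_card _ _ _ 1, one_pow, mul_one]
    intro j hj
    exact Pi.mulSingle_eq_of_ne (Finset.ne_of_mem_erase hj).symm (f j)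
  · erw [if_neg hk, Finset.noncommProd_eq_pow_card _ _ _ 1, one_pow]
    intro j hj
    exact Pi.mulSingle_eq_of_ne (fun h => hk (by rw [h]; exact hj)) (f j)

theorem singleProd_mem {H : Subgroup (∀ j, G j)} [DecidableEq ι] {s : Finset ι} {f : ∀ j, G j}
    (h : ∀ j ∈ s, Pi.mulSingle j (f j) ∈ H) : singleProd s f ∈ H :=
  Submonoid.noncommProd_mem H.toSubmonoid _ _ _ h

end PiFactor

section Main

variable {ι : Type*} (G : ι → Type*) [∀ i, Group (G i)] [∀ i, TopologicalSpace (G i)]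
    [∀ i, IsTopologicalGroup (G i)] [∀ i, CompactSpace (G i)] [∀ i, T2Space (G i)]
    [∀ i, TotallyDisconnectedSpace (G i)]

theorem commutator_le_of_forall_map_eq_top
    (hdisj : ∀ i j, i ≠ j →
      ∀ (S : Type) [Group S] [Finite S] [TopologicalSpace S] [DiscreteTopology S],
        IsSimpleGroup S → (¬ ∀ a b : S, a * b = b * a) →
        ¬ ((∃ f : G i →* S, Continuous f ∧ Function.Surjective f) ∧
           (∃ f : G j →* S, Continuous f ∧ Function.Surjective f)))
    (H : Subgroup (∀ i, G i)) (hmax : IsMaximalClosedSubgroup H)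
    (hsurj : ∀ i, H.map (Pi.evalMonoidHom G i) = ⊤) :
    commutator (∀ i, G i) ≤ H := by
  classical
  have hopen : IsOpen (H : Set (∀ i, G i)) := isOpen_of_isMaximalClosed hmax
  have hsurj' : ∀ i (a : G i), ∃ h ∈ H, h i = a := by
    intro i a
    have ha : a ∈ H.map (Pi.evalMonoidHom G i) := (hsurj i).symm ▸ Subgroup.mem_top a
    obtain ⟨h, hh, hha⟩ := ha
    exact ⟨h, hh, hha⟩
  obtain ⟨F, V, hVopen, hVsub⟩ :
      ∃ (F : Finset ι) (V : ∀ j, Subgroup (G j)), (∀ j, IsOpen ((V j : Subgroup (G j)) : Set (G j))) ∧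
        ∀ x : ∀ i, G i, (∀ j ∈ F, x j ∈ V j) → x ∈ H := by
    obtain ⟨F, u, hu, husub⟩ := isOpen_pi_iff.mp hopen 1 (one_mem H)
    have hchoice : ∀ j : ι, ∃ Vj : Subgroup (G j), IsOpen ((Vj : Subgroup (G j)) : Set (G j)) ∧
        (j ∈ F → (Vj : Set (G j)) ⊆ u j) := by
      intro j
      by_cases hj : j ∈ F
      · obtain ⟨hopenj, h1j⟩ := hu j hj
        obtain ⟨W, hW, hW1, hWu⟩ := compact_exists_isClopen_in_isOpen hopenj h1j
        obtain ⟨N, hN⟩ := IsTopologicalGroup.exist_openNormalSubgroup_sub_clopen_nhds_of_one hW hW1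
        exact ⟨N.toSubgroup, N.isOpen, fun _ => hN.trans hWu⟩
      · refine ⟨⊤, ?_, fun h => absurd h hj⟩
        rw [Subgroup.coe_top]
        exact isOpen_univ
    choose V hV1 hV2 using hchoice
    refine ⟨F, V, hV1, ?_⟩
    intro x hx
    exact husub (fun j hj => hV2 j hj (hx j hj))
  have key : ∀ (i : ι) (a b : G i), Pi.mulSingle i ⁅a, b⁆ ∈ H := by
    intro i
    by_contra hcon
    push_neg at hcon
    obtain ⟨a, b, hab⟩ := hcon
    set K : Subgroup (G i) := Subgroup.comap (MonoidHom.mulSingle G i) H with hK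
    have hmemK : ∀ {g : G i}, g ∈ K ↔ Pi.mulSingle i g ∈ H := fun {g} => Iff.rfl
    have habK : ⁅a, b⁆ ∉ K := fun h => hab (hmemK.mp h)
    have hKopen : IsOpen (K : Set (G i)) := by
      rw [hK, Subgroup.coe_comap]
      exact hopen.preimage (continuous_mulSingle i)
    haveI hKnormal : K.Normal := by
      constructor
      intro n hn g
      obtain ⟨h, hh, hhg⟩ := hsurj' i g
      rw [hmemK] at hn ⊢
      have heq : Pi.mulSingle i (g * n * g⁻¹) = h * Pi.mulSingle i n * h⁻¹ := by
        rw [conj_mulSingle, hhg]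
      rw [heq]
      exact mul_mem (mul_mem hh hn) (inv_mem hh)
    have hKne : K ≠ ⊤ := fun h => habK (h ▸ Subgroup.mem_top _)
    have hdich : ∀ N : Subgroup (G i), N.Normal → K ≤ N → N = K ∨ N = ⊤ := by
      intro N hNnormal hKN
      by_contra hcon2
      push_neg at hcon2
      obtain ⟨hNK, hNtop⟩ := hcon2
      have hNopen : IsOpen (N : Set (G i)) := Subgroup.isOpen_mono hKN hKopen
      set W := piFactor i N with hW
      haveI hWnormal : W.Normal := piFactor_normal hNnormal
      have hWclosed : IsClosed ((W : Subgroup (∀ i, G i)) : Set (∀ i, G i)) :=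
        piFactor_isClosed (N.isClosed_of_isOpen hNopen)
      have hHWclosed : IsClosed ((H ⊔ W : Subgroup (∀ i, G i)) : Set (∀ i, G i)) :=
        isClosed_sup_of_normal hmax.1 hWclosed
      by_cases htop : H ⊔ W = ⊤
      · apply hNtop
        rw [Subgroup.eq_top_iff']
        intro g
        have hg : Pi.mulSingle i g ∈ H ⊔ W := htop ▸ Subgroup.mem_top _
        rw [← SetLike.mem_coe, Subgroup.mul_normal] at hg
        obtain ⟨h, hh, w, hw, hhw⟩ := hg
        have hw' : w⁻¹ ∈ W := inv_mem hw
        have hh' : h = Pi.mulSingle i (g * (w i)⁻¹) := by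
          have h1 : h = Pi.mulSingle i g * w⁻¹ := by rw [← hhw]; group
          rw [h1, eq_mulSingle_of_mem_piFactor hw', ← Pi.mulSingle_mul]
          rfl
        have hk : g * (w i)⁻¹ ∈ K := hmemK.mpr (hh' ▸ hh)
        have : g = (g * (w i)⁻¹) * (w i) := by group
        rw [this]
        exact mul_mem (hKN hk) hw.1
      · have heqH := hmax.2.2 _ hHWclosed htop le_sup_left
        have hWH : W ≤ H := le_trans le_sup_right heqH.le
        apply hNK
        refine le_antisymm ?_ hKN
        intro n hn
        exact hmemK.mpr (hWH (mulSingle_mem_piFactor.mpr hn))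
    haveI : Nontrivial ((G i) ⧸ K) := ⟨⟨QuotientGroup.mk ⁅a, b⁆, 1, by
      rw [Ne, QuotientGroup.eq_one_iff]; exact habK⟩⟩
    haveI hQsimple : IsSimpleGroup ((G i) ⧸ K) := by
      constructor
      intro Nbar hNbar
      rcases hdich (Subgroup.comap (QuotientGroup.mk' K) Nbar) (hNbar.comap _) (fun x hx => by
          rw [Subgroup.mem_comap]
          have hx1 : (QuotientGroup.mk' K) x = 1 := (QuotientGroup.eq_one_iff x).mpr hx
          rw [hx1]; exact Nbar.one_mem) with h | h
      · left
        rw [← Subgroup.map_comap_eq_self_of_surjective (QuotientGroup.mk'_surjective K) Nbar, h,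
          Subgroup.map_eq_bot_iff, QuotientGroup.ker_mk']
      · right
        rw [← Subgroup.map_comap_eq_self_of_surjective (QuotientGroup.mk'_surjective K) Nbar, h]
        exact Subgroup.map_top_of_surjective _ (QuotientGroup.mk'_surjective K)
    set A := piFactor i (⊤ : Subgroup (G i)) with hA
    haveI hAnormal : A.Normal := piFactor_normal inferInstance
    have hAclosed : IsClosed ((A : Subgroup (∀ i, G i)) : Set (∀ i, G i)) := by
      apply piFactor_isClosed
      rw [Subgroup.coe_top]
      exact isClosed_univ
    have hAnle : ¬ A ≤ H := by
      intro hle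
      exact habK (hmemK.mpr (hle (mulSingle_mem_piFactor.mpr (Subgroup.mem_top _))))
    have hHA : H ⊔ A = ⊤ := by
      by_contra hne2
      exact hAnle (le_trans le_sup_right
        (hmax.2.2 _ (isClosed_sup_of_normal hmax.1 hAclosed) hne2 le_sup_left).le)
    have hdecomp : ∀ x : ∀ j, G j, ∃ h ∈ H, ∃ w ∈ A, h * w = x := by
      intro x
      have hx : x ∈ H ⊔ A := hHA ▸ Subgroup.mem_top x
      rw [← SetLike.mem_coe, Subgroup.mul_normal] at hx
      obtain ⟨h, hh, w, hw, hhw⟩ := hx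
      exact ⟨h, hh, w, hw, hhw⟩
    have wd : ∀ {h₁ w₁ h₂ w₂ : ∀ j, G j}, h₁ ∈ H → w₁ ∈ A → h₂ ∈ H → w₂ ∈ A →
        h₁ * w₁ = h₂ * w₂ →
        (QuotientGroup.mk (h₁ i) : (G i) ⧸ K) = QuotientGroup.mk (h₂ i) := by
      intro h₁ w₁ h₂ w₂ hh₁ hw₁ hh₂ hw₂ heq
      symm
      rw [QuotientGroup.eq]
      have hx : h₂⁻¹ * h₁ = w₂ * w₁⁻¹ := by
        have h1' : h₁ = h₂ * w₂ * w₁⁻¹ := by rw [← heq]; group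
        rw [h1']; group
      have hmem1 : h₂⁻¹ * h₁ ∈ H := mul_mem (inv_mem hh₂) hh₁
      have hmem2 : h₂⁻¹ * h₁ ∈ A := hx ▸ mul_mem hw₂ (inv_mem hw₁)
      have hsingle := eq_mulSingle_of_mem_piFactor hmem2
      have hm : Pi.mulSingle i ((h₂⁻¹ * h₁) i) ∈ H := hsingle ▸ hmem1
      have hmk : (h₂⁻¹ * h₁) i ∈ K := hmemK.mpr hm
      simpa [Pi.mul_apply, Pi.inv_apply] using hmk
    have Φeq0 : ∀ x : ∀ j, G j, ∀ {h w : ∀ j, G j}, h ∈ H → w ∈ A → h * w = x →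
        (QuotientGroup.mk ((hdecomp x).choose i) : (G i) ⧸ K) = QuotientGroup.mk (h i) := by
      intro x h w hh hw hx
      obtain ⟨hc, w', hw', hx'⟩ := (hdecomp x).choose_spec
      exact wd hc hw' hh hw (hx'.trans hx.symm)
    set Φ : (∀ j, G j) →* (G i) ⧸ K :=
      { toFun := fun x => QuotientGroup.mk ((hdecomp x).choose i)
        map_one' := by
          show (QuotientGroup.mk ((hdecomp 1).choose i) : (G i) ⧸ K) = 1
          rw [Φeq0 1 (one_mem H) (one_mem A) (mul_one 1)]
          simp
        map_mul' := by
          intro x y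
          obtain ⟨h, hh, w, hw, hx⟩ := hdecomp x
          obtain ⟨h', hh', w', hw', hy⟩ := hdecomp y
          have hxy : (h * h') * ((h'⁻¹ * w * h') * w') = x * y := by
            rw [← hx, ← hy]; group
          have hwmem : (h'⁻¹ * w * h') * w' ∈ A := by
            refine mul_mem ?_ hw'
            have hcj := hAnormal.conj_mem w hw h'⁻¹
            simpa using hcj
          show (QuotientGroup.mk ((hdecomp (x * y)).choose i) : (G i) ⧸ K) =
            QuotientGroup.mk ((hdecomp x).choose i) * QuotientGroup.mk ((hdecomp y).choose i)
          rw [Φeq0 _ (mul_mem hh hh') hwmem hxy, Φeq0 _ hh hw hx, Φeq0 _ hh' hw' hy]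
          simp } with hΦ
    have Φeq : ∀ {h w x : ∀ j, G j}, h ∈ H → w ∈ A → h * w = x →
        Φ x = QuotientGroup.mk (h i) := by
      intro h w x hh hw hx
      exact Φeq0 x hh hw hx
    have ΦH : ∀ {h : ∀ j, G j}, h ∈ H → Φ h = QuotientGroup.mk (h i) :=
      fun {h} hh => Φeq hh (one_mem A) (mul_one h)
    have ΦA : ∀ {w : ∀ j, G j}, w ∈ A → Φ w = 1 := by
      intro w hw
      rw [Φeq (one_mem H) hw (one_mul w)]
      simp
    have Φsurj : Function.Surjective Φ := by
      intro q
      obtain ⟨c, hc⟩ := QuotientGroup.mk'_surjective K q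
      obtain ⟨h, hh, hhi⟩ := hsurj' i c
      exact ⟨h, by rw [ΦH hh, hhi]; exact hc⟩
    have hex : ∃ j, j ≠ i ∧ ∃ g : G j, Φ (Pi.mulSingle j g) ≠ 1 := by
      by_contra h'
      push_neg at h'
      obtain ⟨h₀, hh₀, hh₀i⟩ := hsurj' i ⁅a, b⁆
      have h1 : Φ h₀ = QuotientGroup.mk ⁅a, b⁆ := by rw [ΦH hh₀, hh₀i]
      have h2 : Φ h₀ = 1 := by
        have hdec : h₀ = singleProd (F.erase i) h₀ *
            ((fun k => if k ∈ F ∨ k = i then 1 else h₀ k) * Pi.mulSingle i (h₀ i)) := by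
          funext k
          simp only [Pi.mul_apply, singleProd_apply]
          by_cases hk : k = i
          · subst hk
            simp [Finset.notMem_erase]
          · by_cases hkF : k ∈ F
            · simp [Finset.mem_erase, hk, hkF, Pi.mulSingle_eq_of_ne hk]
            · simp [Finset.mem_erase, hk, hkF, Pi.mulSingle_eq_of_ne hk]
        rw [hdec, map_mul, map_mul]
        have ht1 : Φ (singleProd (F.erase i) h₀) = 1 := by
          unfold singleProd
          erw [Finset.map_noncommProd, Finset.noncommProd_eq_pow_card _ _ _ 1, one_pow]
          intro j hj
          exact h' j (Finset.ne_of_mem_erase hj) (h₀ j)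
        have hu1 : Φ (fun k => if k ∈ F ∨ k = i then 1 else h₀ k) = 1 := by
          have humem : (fun k => if k ∈ F ∨ k = i then 1 else h₀ k) ∈ H := by
            apply hVsub
            intro j hj
            simp only [hj, true_or, if_true]
            exact one_mem _
          rw [ΦH humem]
          simp
        have hs1 : Φ (Pi.mulSingle i (h₀ i)) = 1 :=
          ΦA (mulSingle_mem_piFactor.mpr (Subgroup.mem_top _))
        rw [ht1, hu1, hs1]
        simp
      rw [h1] at h2
      exact habK ((QuotientGroup.eq_one_iff _).mp h2)
    obtain ⟨j, hji, g₀, hg₀⟩ := hex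
    set cj : G j →* (G i) ⧸ K := Φ.comp (MonoidHom.mulSingle G j) with hcj
    have hcrange_normal : cj.range.Normal := by
      constructor
      intro x hx q
      obtain ⟨g, hg⟩ := hx
      obtain ⟨z, hz⟩ := Φsurj q
      refine ⟨z j * g * (z j)⁻¹, ?_⟩
      have h1 : cj (z j * g * (z j)⁻¹) = Φ z * cj g * (Φ z)⁻¹ := by
        show Φ (Pi.mulSingle j (z j * g * (z j)⁻¹)) = Φ z * Φ (Pi.mulSingle j g) * (Φ z)⁻¹
        rw [← conj_mulSingle, map_mul, map_mul, map_inv]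
      rw [h1, hg, hz]
    have hcsurj : Function.Surjective cj := by
      rcases hQsimple.eq_bot_or_eq_top_of_normal cj.range hcrange_normal with h | h
      · exfalso
        apply hg₀
        have : cj g₀ ∈ cj.range := ⟨g₀, rfl⟩
        rw [h] at this
        exact this
      · intro q
        have : q ∈ cj.range := h ▸ Subgroup.mem_top q
        exact this
    have hckeropen : IsOpen ((cj.ker : Subgroup (G j)) : Set (G j)) := by
      refine Subgroup.isOpen_mono (H₁ := Subgroup.comap (MonoidHom.mulSingle G j) H) ?_ ?_
      · intro g hg
        have hg' : Pi.mulSingle j g ∈ H := hg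
        rw [MonoidHom.mem_ker]
        show Φ (Pi.mulSingle j g) = 1
        rw [ΦH hg', show (Pi.mulSingle j g) i = 1 from Pi.mulSingle_eq_of_ne (Ne.symm hji) g]
        simp
      · rw [Subgroup.coe_comap]
        exact hopen.preimage (continuous_mulSingle j)
    haveI hQfinite : Finite ((G i) ⧸ K) := Subgroup.quotient_finite_of_isOpen K hKopen
    obtain ⟨n, ⟨e⟩⟩ := Finite.exists_equiv_fin ((G i) ⧸ K)
    haveI hsmall : Small.{0} ((G i) ⧸ K) := small_map e
    let em : Shrink.{0} ((G i) ⧸ K) ≃* (G i) ⧸ K := Shrink.mulEquiv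
    letI : TopologicalSpace (Shrink.{0} ((G i) ⧸ K)) := ⊥
    haveI : DiscreteTopology (Shrink.{0} ((G i) ⧸ K)) := ⟨rfl⟩
    haveI : Finite (Shrink.{0} ((G i) ⧸ K)) := Finite.of_equiv _ (equivShrink _)
    haveI : Nontrivial (Shrink.{0} ((G i) ⧸ K)) := (equivShrink _).symm.nontrivial
    haveI : IsSimpleGroup (Shrink.{0} ((G i) ⧸ K)) :=
      IsSimpleGroup.isSimpleGroup_of_surjective em.symm.toMonoidHom em.symm.surjective
    have hnab : ¬ ∀ x y : Shrink.{0} ((G i) ⧸ K), x * y = y * x := by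
      intro hcomm
      apply habK
      have hQcomm : ∀ p q : (G i) ⧸ K, p * q = q * p := by
        intro p q
        have hpq := congrArg em (hcomm (em.symm p) (em.symm q))
        rwa [map_mul, map_mul, em.apply_symm_apply, em.apply_symm_apply] at hpq
      rw [← QuotientGroup.eq_one_iff]
      have : (QuotientGroup.mk ⁅a, b⁆ : (G i) ⧸ K) =
          ⁅(QuotientGroup.mk a : (G i) ⧸ K), QuotientGroup.mk b⁆ :=
        map_commutatorElement (QuotientGroup.mk' K) a b
      rw [this, commutatorElement_eq_one_iff_mul_comm]
      exact hQcomm _ _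
    refine hdisj i j (Ne.symm hji) (Shrink.{0} ((G i) ⧸ K)) inferInstance hnab ⟨?_, ?_⟩
    · refine ⟨em.symm.toMonoidHom.comp (QuotientGroup.mk' K), ?_, ?_⟩
      · apply continuous_of_isOpen_ker
        refine Subgroup.isOpen_mono (H₁ := K) ?_ hKopen
        intro x hx
        rw [MonoidHom.mem_ker]
        show em.symm ((QuotientGroup.mk' K) x) = 1
        rw [show (QuotientGroup.mk' K) x = 1 from (QuotientGroup.eq_one_iff x).mpr hx, map_one]
      · exact em.symm.surjective.comp (QuotientGroup.mk'_surjective K)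
    · refine ⟨em.symm.toMonoidHom.comp cj, ?_, ?_⟩
      · apply continuous_of_isOpen_ker
        refine Subgroup.isOpen_mono (H₁ := cj.ker) ?_ hckeropen
        intro x hx
        rw [MonoidHom.mem_ker]
        show em.symm (cj x) = 1
        rw [MonoidHom.mem_ker.mp hx, map_one]
      · exact em.symm.surjective.comp hcsurj
  rw [_root_.commutator_def, Subgroup.commutator_le]
  intro x _ y _
  have hcj : ∀ j, (⁅x, y⁆ : ∀ j, G j) j = ⁅x j, y j⁆ := fun j => rfl
  have ht : singleProd F ⁅x, y⁆ ∈ H := singleProd_mem (fun j _ => by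
    rw [hcj]; exact key j (x j) (y j))
  have hu : (fun k => if k ∈ F then 1 else (⁅x, y⁆ : ∀ j, G j) k) ∈ H := by
    apply hVsub
    intro j hj
    simp only [hj, if_true]
    exact one_mem _
  have hxy : (⁅x, y⁆ : ∀ j, G j) =
      singleProd F ⁅x, y⁆ * (fun k => if k ∈ F then 1 else (⁅x, y⁆ : ∀ j, G j) k) := by
    funext k
    rw [Pi.mul_apply, singleProd_apply]
    by_cases hk : k ∈ F <;> simp [hk]
  rw [hxy]
  exact mul_mem ht hu

end Main

/-- Classification of maximal closed subgroups of a product of profinite groups with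
pairwise disjoint sets of finite nonabelian simple quotients: either `H` is the pullback
of a maximal closed subgroup of one factor, or `H` surjects onto every factor, contains
the closed commutator subgroup, and its image in the abelianization is maximal. -/
theorem maximal_closed_subgroup_of_pi
    {ι : Type*} (G : ι → Type*) [∀ i, Group (G i)] [∀ i, TopologicalSpace (G i)]
    [∀ i, IsTopologicalGroup (G i)] [∀ i, CompactSpace (G i)] [∀ i, T2Space (G i)]
    [∀ i, TotallyDisconnectedSpace (G i)]
    (hdisj : ∀ i j, i ≠ j →
      ∀ (S : Type) [Group S] [Finite S] [TopologicalSpace S] [DiscreteTopology S],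
        IsSimpleGroup S → (¬ ∀ a b : S, a * b = b * a) →
        ¬ ((∃ f : G i →* S, Continuous f ∧ Function.Surjective f) ∧
           (∃ f : G j →* S, Continuous f ∧ Function.Surjective f)))
    (H : Subgroup (∀ i, G i)) (hmax : IsMaximalClosedSubgroup H) :
    (∃ i, IsMaximalClosedSubgroup (H.map (Pi.evalMonoidHom G i)) ∧
        H = Subgroup.comap (Pi.evalMonoidHom G i) (H.map (Pi.evalMonoidHom G i))) ∨
    ((∀ i, H.map (Pi.evalMonoidHom G i) = ⊤) ∧
      (commutator (∀ i, G i)).topologicalClosure ≤ H ∧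
      IsMaximalClosedSubgroup
        (H.map (QuotientGroup.mk' (commutator (∀ i, G i)).topologicalClosure))) := by
  classical
  by_cases hall : ∀ i, H.map (Pi.evalMonoidHom G i) = ⊤
  · right
    have hcomm : (commutator (∀ i, G i)).topologicalClosure ≤ H :=
      Subgroup.topologicalClosure_minimal _
        (commutator_le_of_forall_map_eq_top G hdisj H hmax hall) hmax.1
    refine ⟨hall, hcomm, ?_⟩
    set N := (commutator (∀ i, G i)).topologicalClosure with hN
    haveI : N.Normal := Subgroup.is_normal_topologicalClosure _
    have hker : (QuotientGroup.mk' N).ker = N := QuotientGroup.ker_mk' N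
    have hcl : IsClosed ((H.map (QuotientGroup.mk' N) :
        Subgroup ((∀ i, G i) ⧸ N)) : Set ((∀ i, G i) ⧸ N)) := by
      rw [← (QuotientGroup.isQuotientMap_mk N).isClosed_preimage]
      have hpre : (QuotientGroup.mk : (∀ i, G i) → (∀ i, G i) ⧸ N) ⁻¹'
          (H.map (QuotientGroup.mk' N)) =
          ((Subgroup.comap (QuotientGroup.mk' N) (H.map (QuotientGroup.mk' N)) :
            Subgroup (∀ i, G i)) : Set (∀ i, G i)) := rfl
      rw [hpre, Subgroup.comap_map_eq, hker, sup_of_le_left hcomm]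
      exact hmax.1
    have hne : H.map (QuotientGroup.mk' N) ≠ ⊤ := by
      intro h
      apply hmax.2.1
      have hcm := congrArg (Subgroup.comap (QuotientGroup.mk' N)) h
      rw [Subgroup.comap_map_eq, hker, sup_of_le_left hcomm, Subgroup.comap_top] at hcm
      exact hcm
    exact (pullback_isMaximalClosed (QuotientGroup.mk' N) QuotientGroup.continuous_mk
      (QuotientGroup.mk'_surjective N) hmax hcl hne).1
  · left
    push_neg at hall
    obtain ⟨i, hi⟩ := hall
    have hcl : IsClosed ((H.map (Pi.evalMonoidHom G i) : Subgroup (G i)) : Set (G i)) := by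
      have himg : IsCompact ((Pi.evalMonoidHom G i) '' (H : Set (∀ i, G i))) :=
        hmax.1.isCompact.image (continuous_apply i)
      have hmapeq : ((H.map (Pi.evalMonoidHom G i) : Subgroup (G i)) : Set (G i)) =
          (Pi.evalMonoidHom G i) '' (H : Set (∀ i, G i)) := Subgroup.coe_map _ _
      rw [hmapeq]
      exact himg.isClosed
    have hsurjf : Function.Surjective (Pi.evalMonoidHom G i) :=
      fun a => ⟨Pi.mulSingle i a, Pi.mulSingle_eq_same i a⟩
    obtain ⟨h1, h2⟩ := pullback_isMaximalClosed (Pi.evalMonoidHom G i)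
      (continuous_apply i) hsurjf hmax hcl hi
    exact ⟨i, h1, h2⟩
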